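/- Let Ω ⊆ ℝ³ and let f : Ω → ℝ be bounded and admit at a point x ∈ Ω the local modulus of continuity ω_x(δ) = K·δ + D (with constants K ≥ 0 and D ≥ 0) with respect to ‖·‖_∞. Suppose that for each n ∈ ℕ one is given a finite index set I_n, nodes x_i^{(n)} ∈ Ω (i ∈ I_n), and basis functions B_i^{(n)} : ℝ³ → ℝ that are nonnegative, normalized on Ω, and have compact support parameter α_n > 0 with respect to ‖·‖_∞, and suppose α_n → 0 as n → ∞. Then limsup_{n → ∞} |P_n f(x) − f(x)| ≤ D. -/
import Mathlib


open Filter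

/-- Gibbs-effect plateau: at a point where the bounded function `f` admits the
local modulus of continuity `ω(δ) = K·δ + D`, interpolants built from
nonnegative, normalized bases with compact support parameters `α_n → 0`
satisfy `limsup_n |P_n f(x) − f(x)| ≤ D`. -/
theorem stmt_10
    (Ω : Set (Fin 3 → ℝ)) (f : (Fin 3 → ℝ) → ℝ)
    (hfbdd : ∃ C : ℝ, ∀ y ∈ Ω, |f y| ≤ C)
    (x : Fin 3 → ℝ) (hx : x ∈ Ω)
    (K D : ℝ) (hK : 0 ≤ K) (hD : 0 ≤ D)
    (hmod : ∀ δ > (0 : ℝ), ∀ y ∈ Ω, ‖y - x‖ ≤ δ → |f y - f x| ≤ K * δ + D)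
    (I : ℕ → Type) [∀ n, Fintype (I n)]
    (xn : (n : ℕ) → I n → (Fin 3 → ℝ)) (hxn : ∀ n i, xn n i ∈ Ω)
    (B : (n : ℕ) → I n → (Fin 3 → ℝ) → ℝ)
    (hBnonneg : ∀ (n : ℕ) (i : I n) (y : Fin 3 → ℝ), 0 ≤ B n i y)
    (hBnorm : ∀ n : ℕ, ∀ y ∈ Ω, ∑ i, B n i y = 1)
    (α : ℕ → ℝ) (hα : ∀ n, 0 < α n)
    (hBsupp : ∀ (n : ℕ) (i : I n) (y : Fin 3 → ℝ),
      α n ≤ ‖y - xn n i‖ → B n i y = 0)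
    (hαlim : Tendsto α atTop (nhds 0)) :
    Filter.limsup (fun n => |(∑ i, f (xn n i) * B n i x) - f x|) atTop ≤ D := by
  have key : ∀ n, |(∑ i, f (xn n i) * B n i x) - f x| ≤ K * α n + D := by
    intro n
    have hrw : (∑ i, f (xn n i) * B n i x) - f x
        = ∑ i, (f (xn n i) - f x) * B n i x := by
      rw [eq_comm]
      simp only [sub_mul]
      rw [Finset.sum_sub_distrib, ← Finset.mul_sum, hBnorm n x hx, mul_one]
    rw [hrw]
    calc |∑ i, (f (xn n i) - f x) * B n i x|
        ≤ ∑ i, |(f (xn n i) - f x) * B n i x| := Finset.abs_sum_le_sum_abs _ _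
      _ ≤ ∑ i, (K * α n + D) * B n i x := by
          apply Finset.sum_le_sum
          intro i _
          rw [abs_mul, abs_of_nonneg (hBnonneg n i x)]
          by_cases hB : B n i x = 0
          · simp [hB]
          · apply mul_le_mul_of_nonneg_right _ (hBnonneg n i x)
            have hlt : ¬ α n ≤ ‖x - xn n i‖ := fun h => hB (hBsupp n i x h)
            have hnorm : ‖xn n i - x‖ ≤ α n := by
              rw [← norm_neg]; simp only [neg_sub]
              exact le_of_not_ge hlt
            exact hmod (α n) (hα n) (xn n i) (hxn n i) hnorm
      _ = K * α n + D := by rw [← Finset.mul_sum, hBnorm n x hx, mul_one]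
  have htend : Tendsto (fun n => K * α n + D) atTop (nhds D) := by
    have : Tendsto (fun n => K * α n) atTop (nhds 0) := by
      simpa using hαlim.const_mul K
    simpa using this.add_const D
  calc Filter.limsup (fun n => |(∑ i, f (xn n i) * B n i x) - f x|) atTop
      ≤ Filter.limsup (fun n => K * α n + D) atTop := by
        exact limsup_le_limsup (Eventually.of_forall key)
          (IsBoundedUnder.isCoboundedUnder_le
            ⟨0, eventually_map.2 (Eventually.of_forall fun n => abs_nonneg _)⟩)
          htend.isBoundedUnder_le
    _ = D := htend.limsup_eq
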